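/- arXiv:1705.03581 — 6 statements merged into one kernel-verified Lean document; each statement's English description precedes it below -/
import Mathlib

section
/- Let T_1, ..., T_k be a partition of an n-element set with |T_1| ≤ |T_2| ≤ ... ≤ |T_k|, and suppose k = δn + 1 for some δ ∈ (0,1). Let i be the maximum index such that |T_1 ∪ ... ∪ T_i| ≤ δn, and set A = T_1 ∪ ... ∪ T_i. Then |A| ≥ δn − √n. -/
open Finset

/-- Let `T 0, …, T (k-1)` be a partition of an `n`-element set into
pairwise disjoint nonempty parts sorted in nondecreasing order of size, with
`k = δn + 1`. If `A` is the union of the first `i` parts, `|A| ≤ δn`, and adding the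
next part would exceed `δn` (maximality of `i`), then `|A| ≥ δn − √n`. -/
theorem prefix_union_card_ge {α : Type*} [DecidableEq α] (n k : ℕ) (δ : ℝ)
    (hδ : 0 < δ) (hδ1 : δ < 1)
    (T : Fin k → Finset α)
    (hdisj : ∀ i j, i ≠ j → Disjoint (T i) (T j))
    (hne : ∀ i, (T i).Nonempty)
    (hsorted : ∀ i j : Fin k, i ≤ j → (T i).card ≤ (T j).card)
    (hcard : ∑ i, (T i).card = n)
    (hk : (k : ℝ) = δ * n + 1)
    (i : ℕ) (hik : i ≤ k)
    (A : Finset α)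
    (hA : A = Finset.biUnion (Finset.univ.filter (fun j : Fin k => (j : ℕ) < i)) T)
    (hAle : (A.card : ℝ) ≤ δ * n)
    (hmax : ∀ hi : i < k, δ * n < ((A ∪ T ⟨i, hi⟩).card : ℝ)) :
    δ * n - Real.sqrt n ≤ (A.card : ℝ) := by
  -- n is positive
  have hn0 : 0 < n := by
    rcases Nat.eq_zero_or_pos n with h | h
    · subst h
      have hk1 : k = 1 := by
        have : (k : ℝ) = 1 := by simpa using hk
        exact_mod_cast this
      subst hk1
      have h0 := (hne 0).card_pos
      rw [Fin.sum_univ_one] at hcard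
      omega
    · exact h
  -- card of A as a sum
  set s : Finset (Fin k) := Finset.univ.filter (fun j : Fin k => (j : ℕ) < i) with hs
  have hsA : A.card = ∑ j ∈ s, (T j).card := by
    rw [hA]
    exact card_biUnion (fun x _ y _ hxy => hdisj x y hxy)
  -- i < k
  have hilt : i < k := by
    rcases lt_or_eq_of_le hik with h | h
    · exact h
    · exfalso
      have hsu : s = Finset.univ := by
        ext j; simp [hs, h, j.isLt]
      rw [hsu] at hsA
      rw [hcard] at hsA
      rw [hsA] at hAle
      have : (n : ℝ) > 0 := by exact_mod_cast hn0
      nlinarith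
  have hscard : s.card = i := by
    have : s = Finset.Iio (⟨i, hilt⟩ : Fin k) := by
      ext j; simp [hs, Fin.lt_def]
    rw [this, Fin.card_Iio]
  have hiA : i ≤ A.card := by
    rw [hsA, ← hscard]
    have := Finset.card_nsmul_le_sum s (fun j => (T j).card) 1 (fun j _ => (hne j).card_pos)
    simpa using this
  -- complement sum
  set t : Finset (Fin k) := Finset.univ.filter (fun j : Fin k => ¬ (j : ℕ) < i) with ht
  have htcard : t.card = k - i := by
    have h1 : s.card + t.card = k := by
      rw [hs, ht]
      rw [Finset.card_filter_add_card_filter_not]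
      simp
    omega
  set m : ℕ := (T ⟨i, hilt⟩).card with hm
  have hsum2 : (k - i) * m ≤ ∑ j ∈ t, (T j).card := by
    rw [← htcard]
    have := Finset.card_nsmul_le_sum t (fun j => (T j).card) m
      (fun j hj => by
        apply hsorted
        have : ¬ (j : ℕ) < i := by simpa [ht] using hj
        exact Fin.mk_le_of_le_val (by omega))
    simpa using this
  have hsplit : A.card + ∑ j ∈ t, (T j).card = n := by
    rw [hsA, hs, ht, Finset.sum_filter_add_sum_filter_not, hcard]
  -- key nat inequality
  have hkey : A.card + (k - i) * m ≤ n := by omega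
  -- pass to reals
  by_contra hcon
  push_neg at hcon
  have hmR : Real.sqrt n < (m : ℝ) := by
    have h1 := hmax hilt
    have h2 : ((A ∪ T ⟨i, hilt⟩).card : ℝ) ≤ (A.card : ℝ) + m := by
      exact_mod_cast Finset.card_union_le A (T ⟨i, hilt⟩)
    nlinarith
  have hkiR : ((k - i : ℕ) : ℝ) = (k : ℝ) - i := by
    push_cast [Nat.cast_sub hik]; ring
  have hkeyR : ((A.card : ℝ)) + ((k - i : ℕ) : ℝ) * m ≤ (n : ℝ) := by
    exact_mod_cast hkey
  have hiAR : (i : ℝ) ≤ (A.card : ℝ) := by exact_mod_cast hiA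
  have hsq : Real.sqrt n * Real.sqrt n = n := Real.mul_self_sqrt (by positivity)
  have hsnn : (0:ℝ) ≤ Real.sqrt n := Real.sqrt_nonneg _
  have hAnn : (0:ℝ) ≤ (A.card : ℝ) := by positivity
  rw [hkiR] at hkeyR
  nlinarith [mul_lt_mul'' (show (1:ℝ) + Real.sqrt n < (k:ℝ) - (A.card:ℝ) by nlinarith)
    hmR (by positivity) hsnn]
end

section
/- Let G be a d-regular edge-weighted graph on n vertices such that every subset S of size exactly δn has Φ(S) ≥ 1 − η, with δn ≤ n/2. Then every partition of V into k = δn + 1 nonempty parts cuts edges of total weight at least (1 − η − 1/(δ√n))·δdn. -/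
open Finset

/-- In a `d`-regular edge-weighted graph on `n` vertices in which every
set of size exactly `δn ≤ n/2` has expansion at least `1 − η`, every partition of the
vertices into `k = δn + 1` nonempty parts (given by a surjective coloring
`c : V → Fin k`) cuts edges of total weight at least `(1 − η − 1/(δ√n))·δ·d·n`. -/
theorem kcut_soundness
    {V : Type*} [Fintype V] [DecidableEq V]
    (w : V → V → ℝ) (d δ η : ℝ) (n m k : ℕ)
    (hn : n = Fintype.card V) (hn0 : 0 < n)
    (hd : 0 ≤ d) (hδ : 0 < δ) (hη : 0 ≤ η)
    (hm : (m : ℝ) = δ * n) (hm2 : 2 * m ≤ n) (hk : k = m + 1)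
    (hsymm : ∀ u v, w u v = w v u) (hnonneg : ∀ u v, 0 ≤ w u v)
    (hreg : ∀ u, ∑ v, w u v = d)
    (hsound : ∀ S : Finset V, S.card = m →
      (1 - η) * d * m ≤ ∑ u ∈ S, ∑ v ∈ Sᶜ, w u v)
    (c : V → Fin k) (hsurj : Function.Surjective c) :
    (1 - η - 1 / (δ * Real.sqrt n)) * (δ * d * n)
      ≤ (1 / 2) * ∑ u, ∑ v, (if c u ≠ c v then w u v else 0) := by
  classical
  set s := Real.sqrt n with hs
  have hs0 : 0 < s := Real.sqrt_pos.mpr (by exact_mod_cast hn0)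
  -- fibers of the coloring
  set P : Fin k → Finset V := fun i => univ.filter (fun v => c v = i) with hP
  have hmemP : ∀ (u : V) (i : Fin k), u ∈ P i ↔ c u = i := by
    intro u i; simp [hP]
  have hPpos : ∀ i, 1 ≤ (P i).card := by
    intro i
    obtain ⟨v, hv⟩ := hsurj i
    exact Finset.card_pos.mpr ⟨v, (hmemP v i).mpr hv⟩
  have hsumP : ∑ i : Fin k, (P i).card = n := by
    rw [hn, ← Finset.card_univ]
    exact (Finset.card_eq_sum_card_fiberwise (fun x _ => Finset.mem_univ (c x))).symm
  -- choose a maximal union of fibers of total size ≤ m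
  set g : Finset (Fin k) → ℕ := fun T => ∑ i ∈ T, (P i).card with hg
  obtain ⟨T, hTmem, hTmax⟩ :=
    Finset.exists_max_image ((univ : Finset (Fin k)).powerset.filter (fun T => g T ≤ m)) g
      ⟨∅, by simp [hg]⟩
  have hTm : g T ≤ m := (Finset.mem_filter.mp hTmem).2
  set a := g T with ha
  have hTcard : T.card ≤ a := by
    calc T.card = ∑ i ∈ T, 1 := by simp
    _ ≤ a := Finset.sum_le_sum fun i _ => hPpos i
  have hout : ∀ i ∉ T, m + 1 ≤ a + (P i).card := by
    intro i hi
    by_contra h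
    push_neg at h
    have hins : g (insert i T) = (P i).card + g T := Finset.sum_insert hi
    have hmem : insert i T ∈
        (univ : Finset (Fin k)).powerset.filter (fun T => g T ≤ m) :=
      Finset.mem_filter.mpr ⟨Finset.mem_powerset.mpr (Finset.subset_univ _), by omega⟩
    have h2 := hTmax _ hmem
    have h3 := hPpos i
    omega
  -- size bound for a : n ≥ a + (m+1-a)^2
  have hn2 : (m + 1 - a) * (m + 1 - a) ≤ n := by
    have hsplit : a + ∑ i ∈ Tᶜ, (P i).card = n := by
      rw [← hsumP, ha, hg]; exact Finset.sum_add_sum_compl T _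
    have h1 : ∀ i ∈ Tᶜ, m + 1 - a ≤ (P i).card := by
      intro i hi
      have := hout i (Finset.mem_compl.mp hi)
      omega
    have h2 : Tᶜ.card * (m + 1 - a) ≤ ∑ i ∈ Tᶜ, (P i).card := by
      calc Tᶜ.card * (m + 1 - a) = ∑ _i ∈ Tᶜ, (m + 1 - a) := by
            rw [Finset.sum_const, smul_eq_mul]
      _ ≤ _ := Finset.sum_le_sum h1
    have h3 : m + 1 - a ≤ Tᶜ.card := by
      have hc : Tᶜ.card = k - T.card := by
        rw [Finset.card_compl, Fintype.card_fin]
      omega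
    have h4 : (m + 1 - a) * (m + 1 - a) ≤ Tᶜ.card * (m + 1 - a) :=
      Nat.mul_le_mul_right _ h3
    omega
  -- real bound : m - s ≤ a
  have har : (m : ℝ) - s ≤ (a : ℝ) := by
    have hb : ((m + 1 - a : ℕ) : ℝ) ≤ s := by
      have h5 : (((m + 1 - a) * (m + 1 - a) : ℕ) : ℝ) ≤ (n : ℝ) := by exact_mod_cast hn2
      have h6 : Real.sqrt (((m + 1 - a : ℕ) : ℝ) * ((m + 1 - a : ℕ) : ℝ)) ≤ s := by
        apply Real.sqrt_le_sqrt
        push_cast at h5 ⊢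
        linarith
      rwa [Real.sqrt_mul_self (by positivity)] at h6
    have haux : ((m + 1 - a : ℕ) : ℝ) + (a : ℝ) = (m : ℝ) + 1 := by
      have : (m + 1 - a) + a = m + 1 := by omega
      exact_mod_cast this
    linarith
  -- the union of the chosen fibers
  set A := T.biUnion P with hA
  have hAcard : A.card = a := by
    have hdisj : ∀ i ∈ T, ∀ j ∈ T, i ≠ j → Disjoint (P i) (P j) := by
      intro i _ j _ hij
      refine Finset.disjoint_left.mpr fun u hui huj => hij ?_
      rw [← (hmemP u i).mp hui, ← (hmemP u j).mp huj]
    rw [hA, Finset.card_biUnion hdisj, ha, hg]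
  have hAmem : ∀ u, u ∈ A ↔ c u ∈ T := by
    intro u
    constructor
    · intro hu
      obtain ⟨i, hi, hui⟩ := Finset.mem_biUnion.mp hu
      rwa [(hmemP u i).mp hui]
    · intro hu
      exact Finset.mem_biUnion.mpr ⟨c u, hu, (hmemP u (c u)).mpr rfl⟩
  -- extend A to a set S of size exactly m
  have hmV : m ≤ Fintype.card V := by omega
  obtain ⟨S, hAS, hScard⟩ :=
    Finset.exists_superset_card_eq (n := m) (hAcard ▸ hTm) hmV
  -- basic sum identity from regularity
  have hrow : ∀ (B : Finset V),
      ∑ u ∈ B, ∑ v ∈ B, w u v + ∑ u ∈ B, ∑ v ∈ Bᶜ, w u v = d * B.card := by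
    intro B
    rw [← Finset.sum_add_distrib]
    have h1 : ∀ u ∈ B, (∑ v ∈ B, w u v + ∑ v ∈ Bᶜ, w u v) = d := fun u _ => by
      rw [Finset.sum_add_sum_compl]; exact hreg u
    rw [Finset.sum_congr rfl h1, Finset.sum_const, nsmul_eq_mul, mul_comm]
  -- internal weight of S, hence of A, is small
  have hSS : ∑ u ∈ S, ∑ v ∈ S, w u v ≤ η * d * m := by
    have h1 := hrow S
    rw [hScard] at h1
    have h2 := hsound S hScard
    nlinarith
  have hAA : ∑ u ∈ A, ∑ v ∈ A, w u v ≤ η * d * m := by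
    refine le_trans ?_ hSS
    calc ∑ u ∈ A, ∑ v ∈ A, w u v
        ≤ ∑ u ∈ A, ∑ v ∈ S, w u v := by
          refine Finset.sum_le_sum fun u _ => ?_
          exact Finset.sum_le_sum_of_subset_of_nonneg hAS fun v _ _ => hnonneg u v
      _ ≤ ∑ u ∈ S, ∑ v ∈ S, w u v :=
          Finset.sum_le_sum_of_subset_of_nonneg hAS fun u _ _ =>
            Finset.sum_nonneg fun v _ => hnonneg u v
  -- the cut of A is large
  have hcutA : d * a - η * d * m ≤ ∑ u ∈ A, ∑ v ∈ Aᶜ, w u v := by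
    have h1 := hrow A
    rw [hAcard] at h1
    linarith
  -- the partition cut dominates the cut of A
  have hAc : ∀ u ∈ A, ∀ v ∈ Aᶜ, c u ≠ c v := by
    intro u hu v hv h
    exact (Finset.mem_compl.mp hv) ((hAmem v).mpr (h ▸ (hAmem u).mp hu))
  have hitenn : ∀ (u v : V), 0 ≤ (if c u ≠ c v then w u v else 0) := by
    intro u v
    by_cases h : c u ≠ c v <;> simp [h, hnonneg u v]
  have hcut : 2 * (∑ u ∈ A, ∑ v ∈ Aᶜ, w u v)
      ≤ ∑ u, ∑ v, (if c u ≠ c v then w u v else 0) := by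
    have e1 : ∑ u ∈ A, ∑ v ∈ Aᶜ, (if c u ≠ c v then w u v else 0)
        = ∑ u ∈ A, ∑ v ∈ Aᶜ, w u v := by
      refine Finset.sum_congr rfl fun u hu => Finset.sum_congr rfl fun v hv => ?_
      rw [if_pos (hAc u hu v hv)]
    have e2 : ∑ u ∈ Aᶜ, ∑ v ∈ A, (if c u ≠ c v then w u v else 0)
        = ∑ u ∈ A, ∑ v ∈ Aᶜ, w u v := by
      rw [Finset.sum_comm]
      refine Finset.sum_congr rfl fun v hv => Finset.sum_congr rfl fun u hu => ?_
      rw [if_pos (Ne.symm (hAc v hv u hu)), hsymm]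
    have le1 : ∑ u ∈ A, ∑ v ∈ Aᶜ, (if c u ≠ c v then w u v else 0)
        ≤ ∑ u ∈ A, ∑ v, (if c u ≠ c v then w u v else 0) :=
      Finset.sum_le_sum fun u _ =>
        Finset.sum_le_sum_of_subset_of_nonneg (Finset.subset_univ _)
          fun v _ _ => hitenn u v
    have le2 : ∑ u ∈ Aᶜ, ∑ v ∈ A, (if c u ≠ c v then w u v else 0)
        ≤ ∑ u ∈ Aᶜ, ∑ v, (if c u ≠ c v then w u v else 0) :=
      Finset.sum_le_sum fun u _ =>
        Finset.sum_le_sum_of_subset_of_nonneg (Finset.subset_univ _)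
          fun v _ _ => hitenn u v
    have etot : ∑ u ∈ A, ∑ v, (if c u ≠ c v then w u v else 0)
        + ∑ u ∈ Aᶜ, ∑ v, (if c u ≠ c v then w u v else 0)
        = ∑ u, ∑ v, (if c u ≠ c v then w u v else 0) :=
      Finset.sum_add_sum_compl A _
    linarith
  -- final arithmetic
  have hδ' : δ ≠ 0 := ne_of_gt hδ
  have hs' : s ≠ 0 := ne_of_gt hs0
  have hns : (n : ℝ) = s * s := (Real.mul_self_sqrt (by positivity)).symm
  have h1 : 1 / (δ * s) * (δ * d * n) = d * s := by
    rw [hns]; field_simp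
  have h2 : (1 - η) * (δ * d * n) = (1 - η) * (d * m) := by
    rw [hm]; ring
  have h3 : d * ((m : ℝ) - s) ≤ d * (a : ℝ) := mul_le_mul_of_nonneg_left har hd
  nlinarith
end

section
/- Let G be a d-regular edge-weighted graph on n vertices such that every S with |S| ∈ [δn/M, δnM] has Φ(S) ≥ 1 − η. Form G' by adding a vertex v* with a self-loop of weight dδn/2, and let k = δn + 1. Then every set T' ⊆ V ∪ {v*} with |T'| ≥ k has density at most (dδn/k)·(1/2 + max{η, 1/(δn) + 1/M}). -/
set_option maxHeartbeats 1000000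


open Finset

/-- Soundness for Densest At-Least-`k`-Subgraph: in a `d`-regular graph
in which every `S` with `|S| ∈ [δn/M, δnM]` has expansion at least `1 − η`, after adding
the vertex `v*` with a self-loop of weight `dδn/2`, every set `T'` of at least
`k = δn + 1` vertices (described by its part `T` inside `V` and a Boolean `b` recording
whether `v* ∈ T'`) has density at most `(dδn/k)·(1/2 + max{η, 1/(δn) + 1/M})`. -/
theorem dalks_soundness
    {V : Type*} [Fintype V] [DecidableEq V]
    (w : V → V → ℝ) (d δ η M : ℝ) (n k : ℕ)
    (hn : n = Fintype.card V) (hd : 0 ≤ d) (hη : 0 ≤ η) (hM : 1 ≤ M)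
    (hδn : 1 ≤ δ * n) (hk : (k : ℝ) = δ * n + 1) (hhalf : δ * n * M ≤ n / 2)
    (hsymm : ∀ u v, w u v = w v u) (hnonneg : ∀ u v, 0 ≤ w u v)
    (hreg : ∀ u, ∑ v, w u v = d)
    (hsound : ∀ S : Finset V, δ * n / M ≤ (S.card : ℝ) → (S.card : ℝ) ≤ δ * n * M →
      (1 - η) * d * S.card ≤ ∑ u ∈ S, ∑ v ∈ Sᶜ, w u v)
    (T : Finset V) (b : Bool)
    (hT : (k : ℝ) ≤ (T.card : ℝ) + (if b then 1 else 0)) :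
    ((if b then d * δ * n / 2 else 0) + (1 / 2) * ∑ u ∈ T, ∑ v ∈ T, w u v) /
        ((T.card : ℝ) + (if b then 1 else 0))
      ≤ d * δ * n / k * (1 / 2 + max η (1 / (δ * n) + 1 / M)) := by
  have hx : (1:ℝ) ≤ δ * n := hδn
  have hx0 : (0:ℝ) < δ * n := lt_of_lt_of_le one_pos hx
  have hM0 : (0:ℝ) < M := lt_of_lt_of_le one_pos hM
  set x : ℝ := δ * n with hxdef
  set t : ℝ := (T.card : ℝ) with htdef
  have ht0 : (0:ℝ) ≤ t := Nat.cast_nonneg _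
  set β : ℝ := (if b then (1:ℝ) else 0) with hβdef
  have hβ0 : 0 ≤ β := by rcases b <;> simp [hβdef]
  have hβ1 : β ≤ 1 := by rcases b <;> simp [hβdef]
  have hnum : (if b then d * δ * n / 2 else 0) = β * (d * x / 2) := by
    rcases b <;> simp [hβdef, hxdef] <;> ring
  set m : ℝ := max η (1 / x + 1 / M) with hmdef
  have hmη : η ≤ m := le_max_left _ _
  have hm0 : 0 ≤ m := le_trans hη hmη
  have hmM : x + M ≤ x * M * m := by
    have h := le_max_right η (1 / x + 1 / M)
    have h2 : x * M * (1 / x + 1 / M) = M + x := by field_simp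
    nlinarith [mul_le_mul_of_nonneg_left h (le_of_lt (mul_pos hx0 hM0))]
  set W : ℝ := ∑ u ∈ T, ∑ v ∈ T, w u v with hWdef
  have hcutnn : 0 ≤ ∑ u ∈ T, ∑ v ∈ Tᶜ, w u v :=
    Finset.sum_nonneg fun u _ => Finset.sum_nonneg fun v _ => hnonneg u v
  have hWsum : W + ∑ u ∈ T, ∑ v ∈ Tᶜ, w u v = d * t := by
    have h1 : ∑ u ∈ T, ((∑ v ∈ T, w u v) + ∑ v ∈ Tᶜ, w u v) = ∑ u ∈ T, d :=
      Finset.sum_congr rfl fun u _ => by rw [Finset.sum_add_sum_compl]; exact hreg u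
    rw [Finset.sum_add_distrib] at h1
    rw [hWdef, h1, Finset.sum_const, nsmul_eq_mul, htdef, mul_comm]
  have hW0 : 0 ≤ W :=
    Finset.sum_nonneg fun u _ => Finset.sum_nonneg fun v _ => hnonneg u v
  have hWle : W ≤ d * t := by linarith
  have hkpos : (0:ℝ) < (k:ℝ) := by rw [hk]; linarith
  set s : ℝ := t + β with hsdef
  have hsk : (k:ℝ) ≤ s := hT
  have hspos : 0 < s := lt_of_lt_of_le hkpos hsk
  have hst : t ≤ s := by simp [hsdef]; linarith
  rw [hnum, div_le_iff₀ hspos]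
  have hRHS : d * δ * n / ↑k * (1 / 2 + m) * s = (s * (d * x) * (1 / 2 + m)) / ↑k := by
    rw [hxdef]; field_simp
  rw [hRHS, le_div_iff₀ hkpos]
  -- goal : (β * (d * x / 2) + 1 / 2 * W) * ↑k ≤ s * (d * x) * (1 / 2 + m)
  have hcutb : x / M ≤ t → t ≤ x * M → W ≤ η * (d * t) := by
    intro h1 h2
    have := hsound T h1 h2
    nlinarith [hWsum, hcutnn]
  clear hsymm hreg hhalf hn hδn hsound hnonneg hWsum hcutnn
  clear_value x t β m W s
  clear hβdef hmdef hWdef hsdef htdef hxdef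
  rcases le_or_gt t (x * M) with hcase1 | hcase2
  · rcases le_or_gt (x / M) t with hcase1a | hcase1b
    · -- expansion case: W ≤ η d t
      have hWη : W ≤ η * (d * t) := hcutb hcase1a hcase1
      have hk2x : (k:ℝ) ≤ 2 * x := by rw [hk]; linarith
      have hWk : W * ↑k ≤ η * (d * t) * ↑k :=
        mul_le_mul_of_nonneg_right hWη hkpos.le
      nlinarith [mul_nonneg (mul_nonneg (sub_nonneg.2 hβ1) hkpos.le) (mul_nonneg hd hx0.le),
        mul_nonneg (sub_nonneg.2 hsk) (mul_nonneg hd hx0.le),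
        mul_nonneg (mul_nonneg (mul_nonneg hη hd) ht0) (sub_nonneg.2 hk2x),
        mul_nonneg (mul_nonneg (mul_nonneg (sub_nonneg.2 hmη) hd) ht0) hx0.le,
        mul_nonneg (mul_nonneg (mul_nonneg hm0 hd) (sub_nonneg.2 hst)) hx0.le, hWk]
    · -- small case: t < x / M
      have hMt : t * M ≤ x := ((lt_div_iff₀ hM0).mp hcase1b).le
      have htxm : t ≤ x * m := by
        have h3 : t * M ≤ x * m * M := by
          have h4 : x * M * m = x * m * M := by ring
          linarith
        exact le_of_mul_le_mul_right h3 hM0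
      have hWk : W * ↑k ≤ d * t * ↑k := mul_le_mul_of_nonneg_right hWle hkpos.le
      nlinarith [mul_nonneg (mul_nonneg (sub_nonneg.2 hβ1) hkpos.le) (mul_nonneg hd hx0.le),
        mul_nonneg (sub_nonneg.2 hsk) (mul_nonneg hd hx0.le),
        mul_nonneg (mul_nonneg hd hkpos.le) (sub_nonneg.2 htxm),
        mul_nonneg (sub_nonneg.2 hsk) (mul_nonneg hd (mul_nonneg hx0.le hm0)),
        mul_nonneg (mul_nonneg hspos.le hd) (mul_nonneg hx0.le hm0), hWk]
  · -- big case: t > x * M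
    have hsxM : x * M ≤ s := le_trans hcase2.le hst
    have h1 : s * d * (x + M) ≤ s * d * (x * M * m) :=
      mul_le_mul_of_nonneg_left hmM (mul_nonneg hspos.le hd)
    have hk2x : (k:ℝ) ≤ 2 * x := by rw [hk]; linarith
    have e1 : x * t ≤ x * s := mul_le_mul_of_nonneg_left hst hx0.le
    have A1 : ↑k * t ≤ s * x + 2 * s := by
      rw [hk]; nlinarith [e1, hst, hspos.le]
    have A1d : d * (↑k * t) ≤ d * (s * x + 2 * s) :=
      mul_le_mul_of_nonneg_left A1 hd
    have A2M : M * (β * (d * x / 2) * ↑k) ≤ s * d * x := by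
      nlinarith [mul_nonneg (mul_nonneg (sub_nonneg.2 hβ1) (mul_nonneg hd hx0.le))
          (mul_nonneg hkpos.le hM0.le),
        mul_nonneg (mul_nonneg (sub_nonneg.2 hk2x) (mul_nonneg hd hx0.le)) hM0.le,
        mul_nonneg (mul_nonneg hd hx0.le) (sub_nonneg.2 hsxM)]
    have A2M2 : s * d * x ≤ M * (s * d * x * m - s * d) := by nlinarith [h1]
    have A2 : β * (d * x / 2) * ↑k ≤ s * d * x * m - s * d :=
      le_of_mul_le_mul_left (A2M.trans A2M2) hM0
    have hWk : W * ↑k ≤ d * t * ↑k := mul_le_mul_of_nonneg_right hWle hkpos.le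
    nlinarith [A2, A1d, hWk]
end

section
/- Let H = (V_H, E_H) be a hypergraph with n = |E_H| hyperedges such that for every T ⊆ V_H with |T| ≤ |V_H|/2 we have |E_H(T)| ≤ εn. Construct the bipartite graph G with both sides equal to E_H and (e1, e2) an edge iff e1 ∩ e2 = ∅. Then G does not contain K_{εn+1, εn+1} as a subgraph. -/
open Finset

/-- Soundness of the reduction from Max UnCut Hypergraph Bisection to
biclique: if every `T ⊆ V_H` with `|T| ≤ |V_H|/2` contains at most `εn` of the `n`
hyperedges, then the bipartite graph with both sides the hyperedge set and edges between
disjoint hyperedges has no `K_{εn+1, εn+1}` subgraph. -/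
theorem muchb_to_biclique_soundness
    {V : Type*} [Fintype V] [DecidableEq V]
    (E : Finset (Finset V)) (ε : ℝ) (hε : 0 ≤ ε) (n : ℕ) (hn : n = E.card)
    (hsound : ∀ T : Finset V, 2 * T.card ≤ Fintype.card V →
      ((E.filter (· ⊆ T)).card : ℝ) ≤ ε * n) :
    ¬ ∃ A B : Finset (Finset V), A ⊆ E ∧ B ⊆ E ∧
        ε * n + 1 ≤ (A.card : ℝ) ∧ ε * n + 1 ≤ (B.card : ℝ) ∧
        ∀ e₁ ∈ A, ∀ e₂ ∈ B, Disjoint e₁ e₂ := by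
  rintro ⟨A, B, hAE, hBE, hA, hB, hdisj⟩
  set T₀ : Finset V := A.sup id with hT₀
  set T₁ : Finset V := B.sup id with hT₁
  have hdT : Disjoint T₀ T₁ := by
    rw [hT₀, Finset.disjoint_sup_left]
    intro e₁ he₁
    rw [hT₁, Finset.disjoint_sup_right]
    intro e₂ he₂
    exact hdisj e₁ he₁ e₂ he₂
  have hcard : T₀.card + T₁.card ≤ Fintype.card V := by
    have := Finset.card_union_of_disjoint hdT ▸ Finset.card_le_univ (T₀ ∪ T₁)
    simpa [Finset.card_union_of_disjoint hdT] using Finset.card_le_univ (T₀ ∪ T₁)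
  have key : ∀ (C : Finset (Finset V)) (T : Finset V), C ⊆ E →
      (∀ e ∈ C, e ⊆ T) → 2 * T.card ≤ Fintype.card V →
      ε * n + 1 ≤ (C.card : ℝ) → False := by
    intro C T hCE hCT hTle hC
    have hsub : C ⊆ E.filter (· ⊆ T) := fun e he =>
      Finset.mem_filter.2 ⟨hCE he, hCT e he⟩
    have := hsound T hTle
    have hle : (C.card : ℝ) ≤ ε * n := le_trans
      (Nat.cast_le.2 (Finset.card_le_card hsub)) this
    linarith
  rcases le_or_gt (2 * T₀.card) (Fintype.card V) with h | h
  · exact key A T₀ hAE (fun e he => Finset.le_sup (f := id) he) h hA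
  · have hT1 : 2 * T₁.card ≤ Fintype.card V := by omega
    exact key B T₁ hBE (fun e he => Finset.le_sup (f := id) he) hT1 hB
end

section
/- Fix a set L of size n, δ ∈ (0,1), positive integers k and N with δ^k = 1/N, and ε ∈ (0,1) with N^ε = ω(n²) asymptotically. Sample U^1,...,U^N independently and uniformly from L^k. Then with probability at least 1 − 2^{−Ω(n²)}, there is no subset S ⊆ L with |S| < δn such that at least N^ε of the tuples U^i lie entirely in S^k. -/
open Finset

/-- Randomized graph product, soundness side. There are absolute
constants `c, C > 0` such that: for `δ ∈ (0,1)`, `k` with `δ^k = 1/N`, and `ε` with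
`N^ε ≥ C·n²`, when `N` tuples `U^i` are drawn independently and uniformly from `L^k`
(`L` of size `n`), the probability that some subset `S ⊆ L` with `|S| < δn` contains at
least `N^ε` of the tuples entirely inside `S^k` is at most `2^{−c·n²}`. -/
theorem randomized_graph_product_soundness :
    ∃ c C : ℝ, 0 < c ∧ 0 < C ∧
      ∀ (n k N : ℕ) (δ ε : ℝ), 0 < n → 0 < k → 0 < N →
        0 < δ → δ < 1 → 0 < ε → ε < 1 →
        δ ^ k = 1 / (N : ℝ) → C * (n : ℝ) ^ 2 ≤ (N : ℝ) ^ ε →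
        ((Finset.univ.filter
            (fun U : Fin N → Fin k → Fin n =>
              ∃ S : Finset (Fin n), (S.card : ℝ) < δ * n ∧
                (N : ℝ) ^ ε ≤ ((Finset.univ.filter fun i => ∀ j, U i j ∈ S).card : ℝ))).card : ℝ)
          / (Fintype.card (Fin N → Fin k → Fin n) : ℝ)
        ≤ (2 : ℝ) ^ (-(c * (n : ℝ) ^ 2)) := by
  classical
  refine ⟨1, 4, one_pos, by norm_num, ?_⟩
  intro n k N δ ε hn hk hN hδ0 hδ1 hε0 hε1 hδk hNε
  set m : ℕ := ⌈(N : ℝ) ^ ε⌉₊ with hm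
  have hn1 : (1 : ℝ) ≤ (n : ℝ) := by exact_mod_cast hn
  have hmge : (4 : ℝ) * (n : ℝ) ^ 2 ≤ (m : ℝ) := le_trans hNε (Nat.le_ceil _)
  have hm1 : n ^ 2 + n + 1 ≤ m := by
    have : ((n ^ 2 + n + 1 : ℕ) : ℝ) ≤ (m : ℝ) := by
      push_cast
      nlinarith [hmge, hn1]
    exact_mod_cast this
  have hmN : m ≤ N := by
    refine Nat.ceil_le.mpr ?_
    have h1N : (1 : ℝ) ≤ (N : ℝ) := by exact_mod_cast hN
    calc (N : ℝ) ^ ε ≤ (N : ℝ) ^ (1 : ℝ) :=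
          Real.rpow_le_rpow_of_exponent_le h1N hε1.le
      _ = (N : ℝ) := Real.rpow_one _
  set A : Finset (Finset (Fin n)) :=
    Finset.univ.powerset.filter (fun S => (S.card : ℝ) < δ * n) with hA
  set P : Finset (Finset (Fin N)) := Finset.powersetCard m Finset.univ with hP
  set E : Finset (Fin n) → Finset (Fin N) → Finset (Fin N → Fin k → Fin n) :=
    fun S I => Finset.univ.filter (fun U => ∀ i ∈ I, ∀ j, U i j ∈ S) with hE
  -- the bad event is contained in the union
  have hsub : (Finset.univ.filter
      (fun U : Fin N → Fin k → Fin n =>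
        ∃ S : Finset (Fin n), (S.card : ℝ) < δ * n ∧
          (N : ℝ) ^ ε ≤ ((Finset.univ.filter fun i => ∀ j, U i j ∈ S).card : ℝ)))
      ⊆ A.biUnion (fun S => P.biUnion (fun I => E S I)) := by
    intro U hU
    rw [mem_filter] at hU
    obtain ⟨-, S, hS, hcount⟩ := hU
    have hcount' : m ≤ (Finset.univ.filter fun i => ∀ j, U i j ∈ S).card :=
      Nat.ceil_le.mpr hcount
    obtain ⟨I, hIsub, hIcard⟩ := Finset.exists_subset_card_eq hcount'
    refine mem_biUnion.mpr ⟨S, ?_, mem_biUnion.mpr ⟨I, ?_, ?_⟩⟩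
    · simp [hA, hS]
    · simp [hP, Finset.mem_powersetCard, hIcard]
    · refine mem_filter.mpr ⟨mem_univ _, fun i hi j => ?_⟩
      exact (mem_filter.mp (hIsub hi)).2 j
  -- cardinality of each cell
  have hEcard : ∀ S : Finset (Fin n), ∀ I ∈ P,
      (E S I).card = (S.card ^ k) ^ m * (n ^ k) ^ (N - m) := by
    intro S I hI
    have hIcard : I.card = m := (Finset.mem_powersetCard.mp hI).2
    have hpi : E S I = Fintype.piFinset
        (fun i => if i ∈ I then Fintype.piFinset (fun _ : Fin k => S) else Finset.univ) := by
      ext U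
      simp only [hE, mem_filter, mem_univ, true_and, Fintype.mem_piFinset]
      constructor
      · intro h i
        by_cases hi : i ∈ I
        · simp only [if_pos hi, Fintype.mem_piFinset]
          exact h i hi
        · simp [if_neg hi]
      · intro h i hi j
        have := h i
        rw [if_pos hi, Fintype.mem_piFinset] at this
        exact this j
    rw [hpi, Fintype.card_piFinset]
    have hcell : ∀ i : Fin N,
        ((if i ∈ I then Fintype.piFinset (fun _ : Fin k => S) else Finset.univ)).card
          = if i ∈ I then S.card ^ k else n ^ k := by
      intro i
      by_cases hi : i ∈ I <;> simp [hi, Fintype.card_piFinset]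
    calc (∏ i : Fin N,
          ((if i ∈ I then Fintype.piFinset (fun _ : Fin k => S) else Finset.univ)).card)
        = ∏ i : Fin N, (if i ∈ I then S.card ^ k else n ^ k) :=
          Finset.prod_congr rfl (fun i _ => hcell i)
      _ = (∏ i ∈ (Finset.univ : Finset (Fin N)) \ I, (if i ∈ I then S.card ^ k else n ^ k))
            * ∏ i ∈ I, (if i ∈ I then S.card ^ k else n ^ k) :=
          (Finset.prod_sdiff (Finset.subset_univ I)).symm
      _ = (n ^ k) ^ (N - m) * (S.card ^ k) ^ m := by
          rw [Finset.prod_congr rfl (fun i hi => if_neg (Finset.mem_sdiff.mp hi).2),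
            Finset.prod_congr rfl (fun i hi => if_pos hi), Finset.prod_const,
            Finset.prod_const, hIcard, Finset.card_sdiff_of_subset (Finset.subset_univ I),
            Finset.card_univ, Fintype.card_fin, hIcard]
      _ = (S.card ^ k) ^ m * (n ^ k) ^ (N - m) := mul_comm _ _
  -- real bound on each cell for S ∈ A
  set T : ℝ := ((n : ℝ) ^ k / (N : ℝ)) ^ m * ((n : ℝ) ^ k) ^ (N - m) with hT
  have hNpos : (0 : ℝ) < (N : ℝ) := by exact_mod_cast hN
  have hcell_le : ∀ S ∈ A, ∀ I ∈ P, ((E S I).card : ℝ) ≤ T := by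
    intro S hS I hI
    rw [hEcard S I hI]
    push_cast
    have hSn : (S.card : ℝ) < δ * n := (mem_filter.mp hS).2
    have h1 : (S.card : ℝ) ^ k ≤ (n : ℝ) ^ k / (N : ℝ) := by
      have : (S.card : ℝ) ^ k < (δ * n) ^ k :=
        pow_lt_pow_left₀ hSn (Nat.cast_nonneg _) hk.ne'
      calc (S.card : ℝ) ^ k ≤ (δ * n) ^ k := this.le
        _ = δ ^ k * (n : ℝ) ^ k := mul_pow _ _ _
        _ = (n : ℝ) ^ k / (N : ℝ) := by rw [hδk]; ring
    refine mul_le_mul_of_nonneg_right ?_ (by positivity)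
    exact pow_le_pow_left₀ (by positivity) h1 m
  -- key counting bound over ℕ
  have hm1' : 1 ≤ m := le_trans (by omega) hm1
  have hfact : 2 ^ (n + n ^ 2) ≤ m.factorial := by
    have h2 : 2 ^ (m - 1) ≤ m.factorial := by
      have := Nat.factorial_mul_pow_le_factorial (m := 1) (n := m - 1)
      simpa [Nat.add_sub_cancel' hm1'] using this
    exact le_trans (Nat.pow_le_pow_right (by norm_num) (by omega)) h2
  have key : 2 ^ (n + n ^ 2) * N.choose m ≤ N ^ m := by
    calc 2 ^ (n + n ^ 2) * N.choose m ≤ m.factorial * N.choose m :=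
          Nat.mul_le_mul_right _ hfact
      _ = N.descFactorial m := (Nat.descFactorial_eq_factorial_mul_choose N m).symm
      _ ≤ N ^ m := Nat.descFactorial_le_pow N m
  have keyR : (2 : ℝ) ^ (n + n ^ 2) * (N.choose m : ℝ) ≤ (N : ℝ) ^ m := by
    exact_mod_cast key
  -- total bound
  have hcardA : (A.card : ℝ) ≤ 2 ^ n := by
    have : A.card ≤ 2 ^ n := by
      calc A.card ≤ (Finset.univ.powerset : Finset (Finset (Fin n))).card :=
            Finset.card_le_card (Finset.filter_subset _ _)
        _ = 2 ^ n := by simp [Finset.card_powerset]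
    exact_mod_cast this
  have hcardP : (P.card : ℝ) = (N.choose m : ℝ) := by
    simp [hP, Finset.card_powersetCard]
  have hB : ((Finset.univ.filter
      (fun U : Fin N → Fin k → Fin n =>
        ∃ S : Finset (Fin n), (S.card : ℝ) < δ * n ∧
          (N : ℝ) ^ ε ≤ ((Finset.univ.filter fun i => ∀ j, U i j ∈ S).card : ℝ))).card : ℝ)
      ≤ 2 ^ n * (N.choose m : ℝ) * T := by
    have h1 : ((Finset.univ.filter
        (fun U : Fin N → Fin k → Fin n =>
          ∃ S : Finset (Fin n), (S.card : ℝ) < δ * n ∧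
            (N : ℝ) ^ ε ≤ ((Finset.univ.filter fun i => ∀ j, U i j ∈ S).card : ℝ))).card : ℝ)
        ≤ ∑ S ∈ A, ∑ I ∈ P, ((E S I).card : ℝ) := by
      have := (Finset.card_le_card hsub).trans
        ((Finset.card_biUnion_le).trans
          (Finset.sum_le_sum (fun S _ => Finset.card_biUnion_le)))
      exact_mod_cast this
    refine h1.trans ?_
    calc ∑ S ∈ A, ∑ I ∈ P, ((E S I).card : ℝ)
        ≤ ∑ S ∈ A, ∑ I ∈ P, T :=
          Finset.sum_le_sum (fun S hS => Finset.sum_le_sum (fun I hI => hcell_le S hS I hI))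
      _ = (A.card : ℝ) * ((P.card : ℝ) * T) := by
          rw [Finset.sum_const, Finset.sum_const]
          simp [nsmul_eq_mul, mul_assoc]
      _ ≤ 2 ^ n * ((N.choose m : ℝ) * T) := by
          rw [hcardP]
          refine mul_le_mul_of_nonneg_right hcardA ?_
          have hTnn : (0 : ℝ) ≤ T := by positivity
          positivity
      _ = 2 ^ n * (N.choose m : ℝ) * T := (mul_assoc _ _ _).symm
  -- denominator
  have hD : (Fintype.card (Fin N → Fin k → Fin n) : ℝ) = ((n : ℝ) ^ k) ^ N := by
    simp [Fintype.card_fun]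
  have hDpos : (0 : ℝ) < ((n : ℝ) ^ k) ^ N := by positivity
  -- rewrite RHS
  have hRHS : (2 : ℝ) ^ (-(1 * (n : ℝ) ^ 2)) = ((2 : ℝ) ^ (n ^ 2 : ℕ))⁻¹ := by
    rw [one_mul]
    have : ((n : ℝ) ^ 2) = ((n ^ 2 : ℕ) : ℝ) := by push_cast; ring
    rw [this, Real.rpow_neg (by norm_num), Real.rpow_natCast]
  rw [hRHS, hD, div_le_iff₀ hDpos]
  -- combine
  have hT_eq : T = ((n : ℝ) ^ k) ^ N / (N : ℝ) ^ m := by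
    rw [hT, div_pow, div_mul_eq_mul_div, ← pow_add, Nat.add_sub_cancel' hmN]
  have hNm : (0 : ℝ) < (N : ℝ) ^ m := by positivity
  have hstep : (2 : ℝ) ^ n * (N.choose m : ℝ) / (N : ℝ) ^ m ≤ ((2 : ℝ) ^ (n ^ 2 : ℕ))⁻¹ := by
    rw [div_le_iff₀ hNm]
    have h2pos : (0 : ℝ) < (2 : ℝ) ^ (n ^ 2 : ℕ) := by positivity
    calc (2 : ℝ) ^ n * (N.choose m : ℝ)
        = ((2 : ℝ) ^ (n ^ 2 : ℕ))⁻¹ * ((2 : ℝ) ^ (n + n ^ 2) * (N.choose m : ℝ)) := by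
          rw [pow_add]; field_simp
      _ ≤ ((2 : ℝ) ^ (n ^ 2 : ℕ))⁻¹ * ((N : ℝ) ^ m) :=
          mul_le_mul_of_nonneg_left keyR (by positivity)
  calc ((Finset.univ.filter
      (fun U : Fin N → Fin k → Fin n =>
        ∃ S : Finset (Fin n), (S.card : ℝ) < δ * n ∧
          (N : ℝ) ^ ε ≤ ((Finset.univ.filter fun i => ∀ j, U i j ∈ S).card : ℝ))).card : ℝ)
      ≤ 2 ^ n * (N.choose m : ℝ) * T := hB
    _ = (2 ^ n * (N.choose m : ℝ) / (N : ℝ) ^ m) * ((n : ℝ) ^ k) ^ N := by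
        rw [hT_eq]; ring
    _ ≤ ((2 : ℝ) ^ (n ^ 2 : ℕ))⁻¹ * ((n : ℝ) ^ k) ^ N :=
        mul_le_mul_of_nonneg_right hstep hDpos.le
end

section
/- Let E_1, ..., E_k be events in a probability space and G_1, ..., G_k further events such that: (i) Pr[E_j | ¬E_1 ∧ ... ∧ ¬E_{j−1}] = c_1 for all j, (ii) Pr[G_q | E_j ∧ ¬G_1 ∧ ... ∧ ¬G_{q−1}] ≤ c_2 for all q < j, and (iii) Pr[Success | E_j ∧ ¬G_1 ∧ ... ∧ ¬G_{j−1}] ≥ 1 − c_3 for all j, where the E_j are mutually exclusive. Then Pr[Success] ≥ (1 − c_3)·∑_{j=1}^k c_1(1 − c_1)^{j−1}(1 − c_2)^{j−1} ≥ 1 − c_3 − (1 − c_1)^k − c_2/c_1. -/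
open Finset

/-- Block-by-block success probability analysis. On a finite probability
space with weights `p`, let `E 0, …, E (k−1)` be pairwise disjoint events, `G j` further
events, and `Success` an event, such that (writing `Pr X = ∑_{ω ∈ X} p ω`, and all
conditional statements in multiplied-out form):
(i) `Pr[E j ∩ ⋂_{q<j} (E q)ᶜ] = c₁ · Pr[⋂_{q<j} (E q)ᶜ]`;
(ii) for `q < j`, `Pr[G q ∩ E j ∩ ⋂_{r<q} (G r)ᶜ] ≤ c₂ · Pr[E j ∩ ⋂_{r<q} (G r)ᶜ]`;
(iii) `Pr[Success ∩ E j ∩ ⋂_{q<j} (G q)ᶜ] ≥ (1 − c₃) · Pr[E j ∩ ⋂_{q<j} (G q)ᶜ]`.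
Then `Pr[Success] ≥ (1 − c₃)·∑_{j<k} c₁(1−c₁)^j(1−c₂)^j ≥ 1 − c₃ − (1−c₁)^k − c₂/c₁`. -/
theorem block_success_probability
    {Ω : Type*} [Fintype Ω] [DecidableEq Ω] (p : Ω → ℝ)
    (hp0 : ∀ ω, 0 ≤ p ω) (hp1 : ∑ ω, p ω = 1)
    (c₁ c₂ c₃ : ℝ)
    (h₁ : 0 < c₁) (h₁' : c₁ ≤ 1) (h₂ : 0 ≤ c₂) (h₂' : c₂ ≤ 1)
    (h₃ : 0 ≤ c₃) (h₃' : c₃ ≤ 1) (hsum : c₁ + c₂ ≤ 1)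
    (k : ℕ) (E G : ℕ → Finset Ω) (Success : Finset Ω)
    (hdisj : ∀ i j, i < k → j < k → i ≠ j → Disjoint (E i) (E j))
    (hi : ∀ j < k,
      ∑ ω ∈ E j ∩ (Finset.range j).inf (fun q => (E q)ᶜ), p ω
        = c₁ * ∑ ω ∈ (Finset.range j).inf (fun q => (E q)ᶜ), p ω)
    (hii : ∀ j < k, ∀ q < j,
      ∑ ω ∈ G q ∩ (E j ∩ (Finset.range q).inf (fun r => (G r)ᶜ)), p ω
        ≤ c₂ * ∑ ω ∈ E j ∩ (Finset.range q).inf (fun r => (G r)ᶜ), p ω)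
    (hiii : ∀ j < k,
      (1 - c₃) * ∑ ω ∈ E j ∩ (Finset.range j).inf (fun q => (G q)ᶜ), p ω
        ≤ ∑ ω ∈ Success ∩ (E j ∩ (Finset.range j).inf (fun q => (G q)ᶜ)), p ω) :
    (1 - c₃) * ∑ j ∈ Finset.range k, c₁ * (1 - c₁) ^ j * (1 - c₂) ^ j
        ≤ ∑ ω ∈ Success, p ω ∧
      1 - c₃ - (1 - c₁) ^ k - c₂ / c₁
        ≤ (1 - c₃) * ∑ j ∈ Finset.range k, c₁ * (1 - c₁) ^ j * (1 - c₂) ^ j := by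
  classical
  set Pr : Finset Ω → ℝ := fun s => ∑ ω ∈ s, p ω with hPrdef
  have hPrnn : ∀ s, 0 ≤ Pr s := fun s => Finset.sum_nonneg fun ω _ => hp0 ω
  have hsplit : ∀ (s t : Finset Ω), Pr s = Pr (s ∩ t) + Pr (s ∩ tᶜ) := by
    intro s t
    have : s ∩ tᶜ = s \ t := by
      ext ω; simp [Finset.mem_sdiff, Finset.mem_inter, Finset.mem_compl]
    rw [this]
    exact (Finset.sum_inter_add_sum_sdiff s t p).symm
  -- Step 1: probability of the E-complement chain
  have hchainE : ∀ j ≤ k, Pr ((Finset.range j).inf (fun q => (E q)ᶜ)) = (1 - c₁) ^ j := by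
    intro j
    induction j with
    | zero =>
        intro _
        simp only [Finset.range_zero, Finset.inf_empty, pow_zero, Finset.top_eq_univ]
        exact hp1
    | succ n ih =>
        intro hn
        have hn' : n < k := hn
        set T := (Finset.range n).inf (fun q => (E q)ᶜ) with hT
        have hrw : (Finset.range (n + 1)).inf (fun q => (E q)ᶜ) = (E n)ᶜ ∩ T := by
          rw [Finset.range_add_one, Finset.inf_insert]; rfl
        have h1 := hsplit T (E n)
        have h2 : Pr (E n ∩ T) = c₁ * Pr T := hi n hn'
        have hTval : Pr T = (1 - c₁) ^ n := ih (Nat.le_of_succ_le hn)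
        have hcomm1 : T ∩ E n = E n ∩ T := Finset.inter_comm _ _
        have hcomm2 : T ∩ (E n)ᶜ = (E n)ᶜ ∩ T := Finset.inter_comm _ _
        rw [hcomm1, hcomm2] at h1
        rw [hrw]
        rw [h2, hTval] at h1
        rw [pow_succ]
        linarith
  -- Step 2: probability of each E j
  have hE : ∀ j < k, Pr (E j) = c₁ * (1 - c₁) ^ j := by
    intro j hj
    have hsub : E j ⊆ (Finset.range j).inf (fun q => (E q)ᶜ) := by
      show E j ≤ _
      apply Finset.le_inf
      intro q hq
      rw [Finset.mem_range] at hq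
      exact (hdisj j q hj (hq.trans hj) (ne_of_gt hq)).le_compl_right
    have heq : E j ∩ (Finset.range j).inf (fun q => (E q)ᶜ) = E j :=
      Finset.inter_eq_left.mpr hsub
    have := hi j hj
    rw [heq] at this
    have h4 : Pr (E j) = c₁ * Pr ((Finset.range j).inf fun q => (E q)ᶜ) := this
    rw [h4, hchainE j hj.le]
  -- Step 3: survival through the G-complement chain
  have hG : ∀ j < k, ∀ q ≤ j,
      (1 - c₂) ^ q * Pr (E j) ≤ Pr (E j ∩ (Finset.range q).inf (fun r => (G r)ᶜ)) := by
    intro j hj q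
    induction q with
    | zero =>
        intro _
        simp only [Finset.range_zero, Finset.inf_empty, pow_zero, one_mul,
          Finset.top_eq_univ, Finset.inter_univ, le_refl]
    | succ n ih =>
        intro hn
        have hn' : n < j := hn
        set T := (Finset.range n).inf (fun r => (G r)ᶜ) with hT
        have hrw : (Finset.range (n + 1)).inf (fun r => (G r)ᶜ) = (G n)ᶜ ∩ T := by
          rw [Finset.range_add_one, Finset.inf_insert]; rfl
        have hset : E j ∩ ((G n)ᶜ ∩ T) = (E j ∩ T) ∩ (G n)ᶜ := by
          ext ω; simp only [Finset.mem_inter, Finset.mem_compl]; tauto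
        have h1 := hsplit (E j ∩ T) (G n)
        have h2 := hii j hj n hn'
        have hcomm : (E j ∩ T) ∩ G n = G n ∩ (E j ∩ T) := Finset.inter_comm _ _
        rw [hcomm] at h1
        have hih := ih (Nat.le_of_succ_le hn)
        have hmul : (1 - c₂) * ((1 - c₂) ^ n * Pr (E j)) ≤ (1 - c₂) * Pr (E j ∩ T) :=
          mul_le_mul_of_nonneg_left hih (by linarith)
        rw [hrw, hset, pow_succ]
        have h2' : Pr (G n ∩ (E j ∩ T)) ≤ c₂ * Pr (E j ∩ T) := h2
        nlinarith [hPrnn (E j ∩ T)]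
  -- Step 4: per-block success bound
  have hblock : ∀ j < k,
      (1 - c₃) * (c₁ * (1 - c₁) ^ j * (1 - c₂) ^ j)
        ≤ Pr (Success ∩ (E j ∩ (Finset.range j).inf (fun q => (G q)ᶜ))) := by
    intro j hj
    have g := hG j hj j le_rfl
    rw [hE j hj] at g
    have h3 := hiii j hj
    have hmul : (1 - c₃) * ((1 - c₂) ^ j * (c₁ * (1 - c₁) ^ j))
        ≤ (1 - c₃) * Pr (E j ∩ (Finset.range j).inf (fun q => (G q)ᶜ)) :=
      mul_le_mul_of_nonneg_left g (by linarith)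
    calc (1 - c₃) * (c₁ * (1 - c₁) ^ j * (1 - c₂) ^ j)
        = (1 - c₃) * ((1 - c₂) ^ j * (c₁ * (1 - c₁) ^ j)) := by ring
      _ ≤ (1 - c₃) * Pr (E j ∩ (Finset.range j).inf (fun q => (G q)ᶜ)) := hmul
      _ ≤ Pr (Success ∩ (E j ∩ (Finset.range j).inf (fun q => (G q)ᶜ))) := h3
  -- Step 5: summing disjoint blocks
  set S : ℕ → Finset Ω := fun j => Success ∩ (E j ∩ (Finset.range j).inf (fun q => (G q)ᶜ))
    with hSdef
  have hSsubE : ∀ j, S j ⊆ E j := fun j =>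
    (Finset.inter_subset_right).trans Finset.inter_subset_left
  have hpd : ((Finset.range k : Finset ℕ) : Set ℕ).PairwiseDisjoint S := by
    intro i hi' j hj' hij
    simp only [Finset.coe_range, Set.mem_Iio] at hi' hj'
    exact Finset.disjoint_coe.mp <| by
      exact_mod_cast ((hdisj i j hi' hj' hij).mono (hSsubE i) (hSsubE j))
  have hsum1 : ∑ j ∈ Finset.range k, Pr (S j) ≤ Pr Success := by
    rw [hPrdef]
    have h1 : ∑ j ∈ Finset.range k, ∑ ω ∈ S j, p ω
        = ∑ ω ∈ (Finset.range k).biUnion S, p ω := (Finset.sum_biUnion hpd).symm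
    rw [show (∑ j ∈ Finset.range k, Pr (S j)) = ∑ j ∈ Finset.range k, ∑ ω ∈ S j, p ω from rfl,
      h1]
    apply Finset.sum_le_sum_of_subset_of_nonneg
    · exact Finset.biUnion_subset.mpr fun i _ => Finset.inter_subset_left
    · exact fun ω _ _ => hp0 ω
  have part1 : (1 - c₃) * ∑ j ∈ Finset.range k, c₁ * (1 - c₁) ^ j * (1 - c₂) ^ j
      ≤ ∑ ω ∈ Success, p ω := by
    rw [Finset.mul_sum]
    calc ∑ j ∈ Finset.range k, (1 - c₃) * (c₁ * (1 - c₁) ^ j * (1 - c₂) ^ j)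
        ≤ ∑ j ∈ Finset.range k, Pr (S j) :=
          Finset.sum_le_sum fun j hj => hblock j (Finset.mem_range.mp hj)
      _ ≤ Pr Success := hsum1
  refine ⟨part1, ?_⟩
  -- Part 2: algebraic lower bound
  have hsumeq : ∑ j ∈ Finset.range k, c₁ * (1 - c₁) ^ j * (1 - c₂) ^ j
      = c₁ * ∑ j ∈ Finset.range k, ((1 - c₁) * (1 - c₂)) ^ j := by
    rw [Finset.mul_sum]
    exact Finset.sum_congr rfl fun j _ => by rw [mul_pow]; ring
  rw [hsumeq]
  set r : ℝ := (1 - c₁) * (1 - c₂) with hr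
  set P : ℝ := ∑ j ∈ Finset.range k, r ^ j with hP
  have hr0 : 0 ≤ r := mul_nonneg (by linarith) (by linarith)
  have hP0 : 0 ≤ P := Finset.sum_nonneg fun j _ => pow_nonneg hr0 j
  have hgeom : (1 - r) * P = 1 - r ^ k := by
    have := geom_sum_mul r k
    nlinarith [this]
  have hrle : r ≤ 1 - c₁ := by nlinarith
  have hBA : r ^ k ≤ (1 - c₁) ^ k := pow_le_pow_left₀ hr0 hrle k
  have hB0 : (0:ℝ) ≤ r ^ k := pow_nonneg hr0 k
  have hA1 : (1 - c₁) ^ k ≤ 1 := pow_le_one₀ (by linarith) (by linarith)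
  rw [show 1 - c₃ - (1 - c₁) ^ k - c₂ / c₁ ≤ (1 - c₃) * (c₁ * P)
      ↔ 1 - c₃ - (1 - c₁) ^ k - (1 - c₃) * (c₁ * P) ≤ c₂ / c₁ from by
    constructor <;> intro <;> linarith]
  rw [le_div_iff₀ h₁]
  rcases le_or_gt c₁ c₂ with hc | hc
  · nlinarith [mul_nonneg (mul_nonneg (by linarith : (0:ℝ) ≤ 1 - c₃) h₁.le) hP0]
  · -- key: c₁^2 * P ≥ (1 - r^k) * (c₁ - c₂)
    have key : (1 - r ^ k) * (c₁ - c₂) ≤ c₁ ^ 2 * P := by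
      have h1 : c₁ * (1 - r ^ k) ≤ (c₁ + c₂) * (c₁ * P) := by
        have e : c₁ * (1 - r ^ k) = c₁ * ((1 - r) * P) := by rw [hgeom]
        rw [e, hr]
        nlinarith [mul_nonneg (mul_nonneg (mul_nonneg h₁.le h₂) h₁.le) hP0]
      nlinarith [mul_nonneg (mul_nonneg h₂ h₂) hP0,
        mul_le_mul_of_nonneg_left h1 (by linarith : (0:ℝ) ≤ c₁ - c₂)]
    nlinarith [mul_nonneg h₃ hB0, mul_nonneg (mul_nonneg h₃ hB0) h₂,
      mul_nonneg h₃ h₂, mul_nonneg hB0 h₂,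
      mul_le_mul_of_nonneg_left key (by linarith : (0:ℝ) ≤ 1 - c₃),
      mul_le_mul_of_nonneg_left hBA h₁.le]
end
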